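/- arXiv:2212.07523 — 2 statements merged into one kernel-verified Lean document; each statement's English description precedes it below -/
import Mathlib

section
/- Let Σ be a set, and let g, h : Σ → [0,1]. If the relations σ ≺_g σ' ⟺ g(σ') < g(σ) and σ ≺_h σ' ⟺ h(σ') < h(σ) are both well-founded on Σ, then the relation induced by the pointwise minimum f(σ) = min(g(σ), h(σ)), namely σ ≺_f σ' ⟺ f(σ') < f(σ), is also well-founded on Σ. -/
/-- if the preference relations induced by `g, h : Σ → [0,1]` are both
well-founded, then the preference relation induced by the pointwise minimum
`f(σ) = min(g(σ), h(σ))` is also well-founded. -/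
theorem wellFounded_min
    {L : Type*} (g h : L → ℝ)
    (hg : ∀ σ, g σ ∈ Set.Icc (0:ℝ) 1) (hh : ∀ σ, h σ ∈ Set.Icc (0:ℝ) 1)
    (hwg : WellFounded (fun σ σ' : L => g σ' < g σ))
    (hwh : WellFounded (fun σ σ' : L => h σ' < h σ)) :
    WellFounded (fun σ σ' : L => min (g σ') (h σ') < min (g σ) (h σ)) := by
  haveI : IsStrictOrder L (fun σ σ' : L => min (g σ') (h σ') < min (g σ) (h σ)) :=
    { irrefl := fun a => lt_irrefl _, trans := fun a b c h1 h2 => h2.trans h1 }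
  haveI : IsStrictOrder L (fun σ σ' : L => g σ' < g σ) :=
    { irrefl := fun a => lt_irrefl _, trans := fun a b c h1 h2 => h2.trans h1 }
  haveI : IsStrictOrder L (fun σ σ' : L => h σ' < h σ) :=
    { irrefl := fun a => lt_irrefl _, trans := fun a b c h1 h2 => h2.trans h1 }
  by_contra hk
  rw [RelEmbedding.wellFounded_iff_isEmpty, not_isEmpty_iff] at hk
  obtain ⟨e⟩ := hk
  -- F is strictly increasing along ℕ
  set F : ℕ → ℝ := fun n => min (g (e n)) (h (e n)) with hF
  have hFmono : StrictMono F := by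
    apply strictMono_nat_of_lt_succ
    intro n
    exact e.map_rel_iff.2 (Nat.lt_succ_self n)
  set p : ℕ → Prop := fun n => g (e n) ≤ h (e n) with hp
  rcases Set.finite_or_infinite {n | p n} with hfin | hinf
  · -- the complement is infinite; h realizes the min infinitely often
    have hcinf : {n | p n}ᶜ.Infinite := hfin.infinite_compl
    have hinf' : (setOf fun n => ¬ p n).Infinite := by
      exact hcinf
    refine RelEmbedding.not_wellFounded
      (RelEmbedding.natGT (fun k => e (Nat.nth (fun n => ¬ p n) k)) ?_) hwh
    intro k
    have hm : ∀ k, ¬ p (Nat.nth (fun n => ¬ p n) k) :=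
      fun k => Nat.nth_mem_of_infinite hinf' k
    have h1 : h (e (Nat.nth (fun n => ¬ p n) k)) = F (Nat.nth (fun n => ¬ p n) k) := by
      have hlt : h (e (Nat.nth (fun n => ¬ p n) k)) < g (e (Nat.nth (fun n => ¬ p n) k)) :=
        not_le.mp (hm k)
      simp [hF, min_eq_right hlt.le]
    have h2 : h (e (Nat.nth (fun n => ¬ p n) (k+1))) = F (Nat.nth (fun n => ¬ p n) (k+1)) := by
      have hlt : h (e (Nat.nth (fun n => ¬ p n) (k+1))) < g (e (Nat.nth (fun n => ¬ p n) (k+1))) :=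
        not_le.mp (hm (k+1))
      simp [hF, min_eq_right hlt.le]
    rw [h1, h2]
    exact hFmono ((Nat.nth_lt_nth hinf').2 (Nat.lt_succ_self k))
  · -- g realizes the min infinitely often
    refine RelEmbedding.not_wellFounded
      (RelEmbedding.natGT (fun k => e (Nat.nth p k)) ?_) hwg
    intro k
    have hinf' : (setOf p).Infinite := hinf
    have hm : ∀ k, p (Nat.nth p k) := fun k => Nat.nth_mem_of_infinite hinf' k
    have h1 : g (e (Nat.nth p k)) = F (Nat.nth p k) := by
      simp [hF, min_eq_left (hm k)]
    have h2 : g (e (Nat.nth p (k+1))) = F (Nat.nth p (k+1)) := by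
      simp [hF, min_eq_left (hm (k+1))]
    rw [h1, h2]
    exact hFmono ((Nat.nth_lt_nth hinf').2 (Nat.lt_succ_self k))
end

section
/- Let Σ be a set, and let g, h : Σ → [0,1]. If the relations σ ≺_g σ' ⟺ g(σ') < g(σ) and σ ≺_h σ' ⟺ h(σ') < h(σ) are both well-founded on Σ, then the relation induced by the pointwise maximum f(σ) = max(g(σ), h(σ)), namely σ ≺_f σ' ⟺ f(σ') < f(σ), is also well-founded on Σ. -/
/-- Auxiliary: if `f ∘ a` is strictly monotone and on an infinite set `S` we have
`f (a n) = g (a n)`, then `fun σ σ' => g σ' < g σ` is not well-founded. -/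
lemma aux_not_wf {L : Type*} (g : L → ℝ) (f : L → ℝ) (a : ℕ → L)
    (hmono : StrictMono (fun n => f (a n)))
    {S : Set ℕ} (hS : S.Infinite) (hSg : ∀ n ∈ S, f (a n) = g (a n)) :
    ¬ WellFounded (fun σ σ' : L => g σ' < g σ) := by
  classical
  haveI : IsStrictOrder L (fun σ σ' : L => g σ' < g σ) :=
    { irrefl := fun x => lt_irrefl _,
      trans := fun x y z h1 h2 => lt_trans h2 h1 }
  have hS' : {n | n ∈ S}.Infinite := hS
  set b : ℕ → L := fun n => a (Nat.nth (· ∈ S) n) with hb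
  have hmem : ∀ n, Nat.nth (· ∈ S) n ∈ S := fun n => Nat.nth_mem_of_infinite hS' n
  have hbs : StrictMono (fun n => g (b n)) := by
    intro m n hmn
    have h1 : f (a (Nat.nth (· ∈ S) m)) < f (a (Nat.nth (· ∈ S) n)) :=
      hmono ((Nat.nth_strictMono hS') hmn)
    simpa [hb, hSg _ (hmem m), hSg _ (hmem n)] using h1
  apply RelEmbedding.not_wellFounded
  exact RelEmbedding.natGT b (fun n => hbs (Nat.lt_succ_self n))

/-- if the preference relations induced by `g, h : Σ → [0,1]` are both
well-founded, then the preference relation induced by the pointwise maximum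
`f(σ) = max(g(σ), h(σ))` is also well-founded. -/
theorem wellFounded_max
    {L : Type*} (g h : L → ℝ)
    (hg : ∀ σ, g σ ∈ Set.Icc (0:ℝ) 1) (hh : ∀ σ, h σ ∈ Set.Icc (0:ℝ) 1)
    (hwg : WellFounded (fun σ σ' : L => g σ' < g σ))
    (hwh : WellFounded (fun σ σ' : L => h σ' < h σ)) :
    WellFounded (fun σ σ' : L => max (g σ') (h σ') < max (g σ) (h σ)) := by
  classical
  haveI : IsStrictOrder L (fun σ σ' : L => max (g σ') (h σ') < max (g σ) (h σ)) :=
    { irrefl := fun x => lt_irrefl _,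
      trans := fun x y z h1 h2 => lt_trans h2 h1 }
  by_contra hnot
  rw [RelEmbedding.wellFounded_iff_isEmpty, not_isEmpty_iff] at hnot
  obtain ⟨e⟩ := hnot
  set f : L → ℝ := fun σ => max (g σ) (h σ) with hf
  set a : ℕ → L := fun n => e n with ha
  have hmono : StrictMono (fun n => f (a n)) := by
    intro m n hmn
    exact e.map_rel_iff.2 hmn
  set S : Set ℕ := {n | f (a n) = g (a n)} with hSdef
  by_cases hS : S.Infinite
  · exact aux_not_wf g f a hmono hS (fun n hn => hn) hwg
  · have hcompl : Sᶜ.Infinite := Set.Finite.infinite_compl (Set.not_infinite.1 hS)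
    have hSh : ∀ n ∈ Sᶜ, f (a n) = h (a n) := by
      intro n hn
      rcases max_choice (g (a n)) (h (a n)) with hc | hc
      · exact absurd hc hn
      · exact hc
    exact aux_not_wf h f a hmono hcompl hSh hwh
end
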